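/- Assume the antilinear system Σₐ is stabilizable and P ∈ ℂ^{n×n} is a Hermitian positive definite solution of the anti-Riccati equation −Q = A₂^H P^# A₂ − A₂^H P^# B₂ (R + B₂^H P^# B₂)^{-1} B₂^H P^# A₂ − P. Then X = Q₀^{-1/2} (P^{-1} + (A₂ Q^{-1} A₂^H)^# + (B₂ R^{-1} B₂^H)^#) Q₀^{-1/2} is the maximal Hermitian positive definite solution of the nonlinear matrix equation X + A^H X^{-#} A = I_n with A = Q₀^{-#/2} A₂ Q^{-1} Q₀^{-1/2}; that is, every Hermitian positive definite matrix Y satisfying Y + A^H Y^{-#} A = I_n satisfies Y ≤ X in the Loewner order. -/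

import Mathlib

open Matrix Filter Topology
open scoped ENNReal ComplexOrder

noncomputable section

/-- Entrywise complex conjugate of a matrix, `M^#`. -/
def mconj {k l : Type*} (A : Matrix k l ℂ) : Matrix k l ℂ := A.map (starRingEnd ℂ)

variable {n m : ℕ}

/-- The antilinear system `x(k+1) = A₂^# x^#(k) + B₂^# u^#(k)` is stabilizable if some
feedback `u(k) = K₁x(k) + K₂^#x^#(k)` drives every closed-loop solution to zero. -/
def AntiStabilizable (A₂ : Matrix (Fin n) (Fin n) ℂ) (B₂ : Matrix (Fin n) (Fin m) ℂ) :
    Prop :=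
  ∃ K₁ K₂ : Matrix (Fin m) (Fin n) ℂ, ∀ x : ℕ → (Fin n → ℂ),
    (∀ k : ℕ, x (k + 1) =
        mconj A₂ *ᵥ star (x k) + mconj B₂ *ᵥ star (K₁ *ᵥ x k + mconj K₂ *ᵥ star (x k))) →
    Tendsto x atTop (𝓝 0)

/-- The trajectory of the antilinear system `x(k+1) = A₂^# x^#(k) + B₂^# u^#(k)` from
the initial condition `x₀` under the control sequence `u`. -/
def atraj (A₂ : Matrix (Fin n) (Fin n) ℂ) (B₂ : Matrix (Fin n) (Fin m) ℂ)
    (x₀ : Fin n → ℂ) (u : ℕ → Fin m → ℂ) : ℕ → Fin n → ℂ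
  | 0 => x₀
  | k + 1 => mconj A₂ *ᵥ star (atraj A₂ B₂ x₀ u k) + mconj B₂ *ᵥ star (u k)

/-- The quadratic cost `J = Σ_k (x(k)^H Q x(k) + u(k)^H R u(k))`, valued in `[0,∞]`. -/
def cost (Q : Matrix (Fin n) (Fin n) ℂ) (R : Matrix (Fin m) (Fin m) ℂ)
    (x : ℕ → Fin n → ℂ) (u : ℕ → Fin m → ℂ) : ℝ≥0∞ :=
  ∑' k : ℕ, ENNReal.ofReal ((star (x k) ⬝ᵥ (Q *ᵥ x k)).re + (star (u k) ⬝ᵥ (R *ᵥ u k)).re)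

/-- The LQR problem for the antilinear system is solvable: for every initial condition
there is a control of finite cost minimizing the cost. -/
def LQRSolvable (A₂ : Matrix (Fin n) (Fin n) ℂ) (B₂ : Matrix (Fin n) (Fin m) ℂ)
    (Q : Matrix (Fin n) (Fin n) ℂ) (R : Matrix (Fin m) (Fin m) ℂ) : Prop :=
  ∀ x₀ : Fin n → ℂ, ∃ u : ℕ → Fin m → ℂ,
    cost Q R (atraj A₂ B₂ x₀ u) u < ⊤ ∧
    ∀ u' : ℕ → Fin m → ℂ, cost Q R (atraj A₂ B₂ x₀ u) u ≤ cost Q R (atraj A₂ B₂ x₀ u') u'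

/-- The anti-Riccati equation
`-Q = A₂^H P^# A₂ - A₂^H P^# B₂ (R + B₂^H P^# B₂)⁻¹ B₂^H P^# A₂ - P`. -/
def AntiRiccati (A₂ : Matrix (Fin n) (Fin n) ℂ) (B₂ : Matrix (Fin n) (Fin m) ℂ)
    (Q : Matrix (Fin n) (Fin n) ℂ) (R : Matrix (Fin m) (Fin m) ℂ)
    (P : Matrix (Fin n) (Fin n) ℂ) : Prop :=
  -Q = A₂ᴴ * mconj P * A₂ -
      A₂ᴴ * mconj P * B₂ * (R + B₂ᴴ * mconj P * B₂)⁻¹ * (B₂ᴴ * mconj P * A₂) - P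

/-- `Q₀ = Q⁻¹ + (A₂ Q⁻¹ A₂^H)^# + (B₂ R⁻¹ B₂^H)^#`. -/
def Qzero (A₂ : Matrix (Fin n) (Fin n) ℂ) (B₂ : Matrix (Fin n) (Fin m) ℂ)
    (Q : Matrix (Fin n) (Fin n) ℂ) (R : Matrix (Fin m) (Fin m) ℂ) :
    Matrix (Fin n) (Fin n) ℂ :=
  Q⁻¹ + mconj (A₂ * Q⁻¹ * A₂ᴴ) + mconj (B₂ * R⁻¹ * B₂ᴴ)


-- ===== auxiliary lemmas =====
section Aux


lemma mconj_eq {k l : Type*} (A : Matrix k l ℂ) : mconj A = (Aᴴ)ᵀ := by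
  ext i j; simp [mconj, conjTranspose_apply]

@[simp] lemma mconj_mconj {k l : Type*} (A : Matrix k l ℂ) : mconj (mconj A) = A := by
  ext i j; simp [mconj]

lemma mconj_add {k l : Type*} (A B : Matrix k l ℂ) : mconj (A + B) = mconj A + mconj B := by
  ext i j; simp [mconj]

lemma mconj_sub {k l : Type*} (A B : Matrix k l ℂ) : mconj (A - B) = mconj A - mconj B := by
  ext i j; simp [mconj]

lemma mconj_neg {k l : Type*} (A : Matrix k l ℂ) : mconj (-A) = -(mconj A) := by
  ext i j; simp [mconj]

lemma mconj_mul {k l p : ℕ} (A : Matrix (Fin k) (Fin l) ℂ) (B : Matrix (Fin l) (Fin p) ℂ) :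
    mconj (A * B) = mconj A * mconj B := by
  simpa [mconj] using Matrix.map_mul (f := (starRingEnd ℂ))

@[simp] lemma mconj_one : mconj (1 : Matrix (Fin n) (Fin n) ℂ) = 1 := by
  ext i j
  simp only [mconj, Matrix.map_apply, Matrix.one_apply]
  split <;> simp

lemma mconj_conjTranspose {k l : Type*} (A : Matrix k l ℂ) :
    mconj (Aᴴ) = (mconj A)ᴴ := by
  ext i j; simp [mconj, conjTranspose_apply]

lemma mconj_inv (A : Matrix (Fin n) (Fin n) ℂ) : mconj (A⁻¹) = (mconj A)⁻¹ := by
  rw [mconj_eq, mconj_eq, ← Matrix.transpose_nonsing_inv (A := Aᴴ),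
    ← Matrix.conjTranspose_nonsing_inv]

lemma mconj_eq_transpose {A : Matrix (Fin n) (Fin n) ℂ} (hA : A.IsHermitian) :
    mconj A = Aᵀ := by rw [mconj_eq, hA.eq]

lemma Matrix.PosDef.mconj {A : Matrix (Fin n) (Fin n) ℂ} (hA : A.PosDef) :
    (mconj A).PosDef := by
  rw [mconj_eq_transpose hA.isHermitian]; exact hA.transpose

lemma Matrix.PosSemidef.mconj {A : Matrix (Fin n) (Fin n) ℂ} (hA : A.PosSemidef) :
    (_root_.mconj A).PosSemidef := by
  rw [mconj_eq_transpose hA.isHermitian]; exact hA.transpose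

lemma Matrix.IsHermitian.mconj {A : Matrix (Fin n) (Fin n) ℂ} (hA : A.IsHermitian) :
    (_root_.mconj A).IsHermitian := by
  rw [mconj_eq_transpose hA]; exact hA.transpose


lemma quadform_sum (U : Matrix (Fin n) (Fin n) ℂ) (v : Fin n → ℂ) :
    star v ⬝ᵥ (U *ᵥ v) = ∑ i, star (v i) * ∑ j, U i j * v j := by
  simp [dotProduct, Matrix.mulVec]

lemma quadform_continuous (U : Matrix (Fin n) (Fin n) ℂ) :
    Continuous fun v : Fin n → ℂ => (star v ⬝ᵥ (U *ᵥ v)).re := by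
  apply Complex.continuous_re.comp
  have : (fun v : Fin n → ℂ => star v ⬝ᵥ (U *ᵥ v))
      = fun v => ∑ i, star (v i) * ∑ j, U i j * v j := by
    ext v; exact quadform_sum U v
  rw [this]
  exact continuous_finset_sum _ fun i _ =>
    ((continuous_apply i).star.mul (continuous_finset_sum _ fun j _ =>
      continuous_const.mul (continuous_apply j)))

lemma real_smul_pi (t : ℝ) (v : Fin n → ℂ) : t • v = (t : ℂ) • v := by
  ext i; simp [Complex.real_smul]

lemma quadform_smul (U : Matrix (Fin n) (Fin n) ℂ) (t : ℝ) (v : Fin n → ℂ) :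
    (star (t • v) ⬝ᵥ (U *ᵥ (t • v))).re = t ^ 2 * (star v ⬝ᵥ (U *ᵥ v)).re := by
  rw [real_smul_pi]
  rw [Matrix.mulVec_smul, star_smul, smul_dotProduct, dotProduct_smul]
  simp only [RCLike.star_def, Complex.conj_ofReal, smul_eq_mul]
  rw [← mul_assoc, ← Complex.ofReal_mul, ← sq, Complex.re_ofReal_mul]

lemma dot_self_re (v : Fin n → ℂ) :
    (star v ⬝ᵥ v).re = ∑ i, ‖v i‖ ^ 2 := by
  simp only [dotProduct, Pi.star_apply, Complex.re_sum]
  congr 1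
  funext i
  rw [RCLike.star_def, mul_comm, Complex.mul_conj, Complex.ofReal_re,
    Complex.normSq_eq_norm_sq]

lemma quad_bounds (U : Matrix (Fin n) (Fin n) ℂ) (hU : U.PosDef) :
    ∃ c C : ℝ, 0 < c ∧ ∀ v : Fin n → ℂ,
      c * (star v ⬝ᵥ v).re ≤ (star v ⬝ᵥ (U *ᵥ v)).re ∧
      (star v ⬝ᵥ (U *ᵥ v)).re ≤ C * (star v ⬝ᵥ v).re := by
  rcases Nat.eq_zero_or_pos n with hn | hn
  · subst hn
    refine ⟨1, 1, one_pos, fun v => ?_⟩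
    have hv : v = 0 := Subsingleton.elim _ _
    simp [hv]
  · classical
    set E := EuclideanSpace ℂ (Fin n) with hE
    let i0 : Fin n := ⟨0, hn⟩
    let e := WithLp.equiv 2 (Fin n → ℂ)
    let f : E → ℝ := fun v => (star (e v) ⬝ᵥ (U *ᵥ (e v))).re
    have hf : Continuous f := (quadform_continuous U).comp (PiLp.continuous_ofLp 2 _)
    have hcs : IsCompact (Metric.sphere (0 : E) 1) := isCompact_sphere 0 1
    have hne : (Metric.sphere (0 : E) 1).Nonempty := by
      refine ⟨EuclideanSpace.single i0 1, ?_⟩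
      rw [mem_sphere_zero_iff_norm, EuclideanSpace.norm_single]
      norm_num
    obtain ⟨vmin, hvminS, hmin⟩ := hcs.exists_isMinOn hne hf.continuousOn
    obtain ⟨vmax, hvmaxS, hmax⟩ := hcs.exists_isMaxOn hne hf.continuousOn
    have hnorm : ∀ w : E, ‖w‖ ^ 2 = (star (e w) ⬝ᵥ (e w)).re := by
      intro w
      rw [dot_self_re, EuclideanSpace.norm_eq, Real.sq_sqrt (by positivity)]
      rfl
    have hv0 : e vmin ≠ 0 := by
      intro h
      have h1 : ‖vmin‖ = 1 := by simpa using hvminS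
      have h2 : ‖vmin‖ ^ 2 = 0 := by rw [hnorm, h]; simp
      rw [h1] at h2; norm_num at h2
    have hc : 0 < f vmin := (Complex.pos_iff.mp (hU.dotProduct_mulVec_pos hv0)).1
    refine ⟨f vmin, f vmax, hc, fun v => ?_⟩
    by_cases hv : v = 0
    · simp [hv]
    · set u : E := (WithLp.equiv 2 (Fin n → ℂ)).symm v with hu
      have heu : e u = v := rfl
      have hun : ‖u‖ ≠ 0 := by
        intro h
        apply hv
        rw [← heu]
        have : u = 0 := norm_eq_zero.mp h
        rw [this]
        rfl
      set w : E := ‖u‖⁻¹ • u with hwdef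
      have hwmem : w ∈ Metric.sphere (0 : E) 1 := by
        rw [mem_sphere_zero_iff_norm]
        exact norm_smul_inv_norm (fun h => hun (by rw [h]; simp))
      have hfu : f u = ‖u‖ ^ 2 * f w := by
        have husm : u = ‖u‖ • w := (smul_inv_smul₀ hun u).symm
        have hew : e (‖u‖ • w) = ‖u‖ • (e w) := rfl
        show (star (e u) ⬝ᵥ (U *ᵥ (e u))).re = _
        rw [show e u = ‖u‖ • (e w) from by rw [← hew, ← husm]]
        exact quadform_smul U ‖u‖ (e w)
      have hdvv : (star v ⬝ᵥ v).re = ‖u‖ ^ 2 := by rw [hnorm u, heu]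
      have hfv : (star v ⬝ᵥ (U *ᵥ v)).re = f u := by rw [← heu]
      constructor
      · rw [hfv, hfu, hdvv]
        have h2 : f vmin ≤ f w := hmin hwmem
        nlinarith [sq_nonneg ‖u‖]
      · rw [hfv, hfu, hdvv]
        have h2 : f w ≤ f vmax := hmax hwmem
        nlinarith [sq_nonneg ‖u‖]

lemma dot_conj (B N : Matrix (Fin n) (Fin n) ℂ) (u : Fin n → ℂ) :
    star u ⬝ᵥ ((Bᴴ * N * B) *ᵥ u) = star (B *ᵥ u) ⬝ᵥ (N *ᵥ (B *ᵥ u)) := by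
  rw [star_mulVec, ← Matrix.mulVec_mulVec, ← Matrix.mulVec_mulVec,
    Matrix.dotProduct_mulVec]

lemma dot_self_nonneg (v : Fin n → ℂ) : 0 ≤ (star v ⬝ᵥ v).re := by
  rw [dot_self_re]; positivity

lemma coord_le_dot_self (v : Fin n → ℂ) (i : Fin n) : ‖v i‖ ^ 2 ≤ (star v ⬝ᵥ v).re := by
  rw [dot_self_re]
  exact Finset.single_le_sum (f := fun j => ‖v j‖ ^ 2) (fun j _ => by positivity)
    (Finset.mem_univ i)

lemma tendsto_mulVec_zero (C : Matrix (Fin n) (Fin n) ℂ) {w : ℕ → Fin n → ℂ}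
    (hw : Tendsto w atTop (𝓝 0)) : Tendsto (fun k => C *ᵥ (w k)) atTop (𝓝 0) := by
  rw [tendsto_pi_nhds] at hw ⊢
  intro i
  have h1 : (fun k => (C *ᵥ w k) i) = fun k => ∑ j, C i j * w k j := by
    ext k; simp [Matrix.mulVec, dotProduct]
  rw [h1]
  have h2 : Tendsto (fun k => ∑ j, C i j * w k j) atTop (𝓝 (∑ j : Fin n, C i j * 0)) := by
    apply tendsto_finset_sum
    intro j _
    exact (hw j).const_mul _
  simpa using h2

lemma tendsto_quad_zero (D : Matrix (Fin n) (Fin n) ℂ) {w : ℕ → Fin n → ℂ}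
    (hw : Tendsto w atTop (𝓝 0)) :
    Tendsto (fun k => star (w k) ⬝ᵥ (D *ᵥ (w k))) atTop (𝓝 0) := by
  have hD := tendsto_mulVec_zero D hw
  rw [tendsto_pi_nhds] at hD
  rw [tendsto_pi_nhds] at hw
  have h1 : (fun k => star (w k) ⬝ᵥ (D *ᵥ (w k)))
      = fun k => ∑ i, star (w k i) * (D *ᵥ (w k)) i := by
    ext k; simp [dotProduct]
  rw [h1]
  have h2 : Tendsto (fun k => ∑ i, star (w k i) * (D *ᵥ w k) i) atTop
      (𝓝 (∑ i : Fin n, star (0 : ℂ) * 0)) := by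
    apply tendsto_finset_sum
    intro i _
    exact ((hw i).star).mul (hD i)
  simpa using h2

lemma stein_decay (M P Qm : Matrix (Fin n) (Fin n) ℂ) (hP : P.PosDef) (hQm : Qm.PosDef)
    (hL : (P - Mᴴ * P * M - Qm).PosSemidef) (v : Fin n → ℂ) :
    Tendsto (fun k => (M ^ k) *ᵥ v) atTop (𝓝 0) := by
  obtain ⟨c₂, C₂, hc₂, hb₂⟩ := quad_bounds P hP
  obtain ⟨c₁, C₁, hc₁, hb₁⟩ := quad_bounds Qm hQm
  set C₂' : ℝ := max C₂ 1 with hC₂'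
  have hC₂'pos : 0 < C₂' := lt_of_lt_of_le one_pos (le_max_right _ _)
  set c : ℝ := min (c₁ / C₂') (1/2) with hc
  have hcpos : 0 < c := lt_min (div_pos hc₁ hC₂'pos) (by norm_num)
  set r : ℝ := 1 - c with hr
  have hr0 : 0 ≤ r := by
    have : c ≤ 1/2 := min_le_right _ _
    simp only [hr]; linarith
  have hr1 : r < 1 := by simp only [hr]; linarith
  have hstep : ∀ w : Fin n → ℂ, (star (M *ᵥ w) ⬝ᵥ (P *ᵥ (M *ᵥ w))).re ≤
      r * (star w ⬝ᵥ (P *ᵥ w)).re := by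
    intro w
    have h0 : 0 ≤ (star w ⬝ᵥ ((P - Mᴴ * P * M - Qm) *ᵥ w)).re := (Complex.nonneg_iff.mp (hL.dotProduct_mulVec_nonneg w)).1
    rw [Matrix.sub_mulVec, Matrix.sub_mulVec, dotProduct_sub, dotProduct_sub,
      dot_conj, Complex.sub_re, Complex.sub_re] at h0
    have hq1 : c * (star w ⬝ᵥ (P *ᵥ w)).re ≤ (star w ⬝ᵥ (Qm *ᵥ w)).re := by
      have l1 : c₁ * (star w ⬝ᵥ w).re ≤ (star w ⬝ᵥ (Qm *ᵥ w)).re := (hb₁ w).1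
      have l2 : (star w ⬝ᵥ (P *ᵥ w)).re ≤ C₂' * (star w ⬝ᵥ w).re := by
        refine le_trans (hb₂ w).2 ?_
        have := dot_self_nonneg w
        nlinarith [le_max_left C₂ (1:ℝ)]
      have hcle : c ≤ c₁ / C₂' := min_le_left _ _
      have hcc : c * C₂' ≤ c₁ := (le_div_iff₀ hC₂'pos).mp hcle
      have e1 := mul_le_mul_of_nonneg_left l2 hcpos.le
      have e2 := mul_le_mul_of_nonneg_right hcc (dot_self_nonneg w)
      nlinarith
    simp only [hr]
    linarith
  have hiter : ∀ k : ℕ, (star ((M ^ k) *ᵥ v) ⬝ᵥ (P *ᵥ ((M ^ k) *ᵥ v))).re ≤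
      r ^ k * (star v ⬝ᵥ (P *ᵥ v)).re := by
    intro k
    induction k with
    | zero => simp
    | succ k ih =>
      have hps : (M ^ (k+1)) *ᵥ v = M *ᵥ ((M ^ k) *ᵥ v) := by
        rw [pow_succ', ← Matrix.mulVec_mulVec]
      rw [hps]
      calc (star (M *ᵥ (M ^ k *ᵥ v)) ⬝ᵥ (P *ᵥ (M *ᵥ (M ^ k *ᵥ v)))).re
          ≤ r * (star (M ^ k *ᵥ v) ⬝ᵥ (P *ᵥ (M ^ k *ᵥ v))).re := hstep _
        _ ≤ r * (r ^ k * (star v ⬝ᵥ (P *ᵥ v)).re) := by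
            apply mul_le_mul_of_nonneg_left ih hr0
        _ = r ^ (k + 1) * (star v ⬝ᵥ (P *ᵥ v)).re := by ring
  rw [tendsto_pi_nhds]
  intro i
  have hgeo : Tendsto (fun k : ℕ => (1 / c₂) * (r ^ k * (star v ⬝ᵥ (P *ᵥ v)).re)) atTop (𝓝 0) := by
    have hg := tendsto_pow_atTop_nhds_zero_of_lt_one hr0 hr1
    have h2 := (hg.mul_const ((star v ⬝ᵥ (P *ᵥ v)).re)).const_mul (1 / c₂)
    have h3 : (1:ℝ) / c₂ * (0 * ((star v ⬝ᵥ (P *ᵥ v)).re)) = 0 := by ring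
    rwa [h3] at h2
  have hsq : Tendsto (fun k => ‖((M ^ k) *ᵥ v) i‖ ^ 2) atTop (𝓝 0) := by
    refine squeeze_zero (fun k => by positivity) (fun k => ?_) hgeo
    calc ‖((M ^ k) *ᵥ v) i‖ ^ 2 ≤ (star ((M ^ k) *ᵥ v) ⬝ᵥ ((M ^ k) *ᵥ v)).re :=
          coord_le_dot_self _ i
      _ ≤ (1 / c₂) * (star ((M ^ k) *ᵥ v) ⬝ᵥ (P *ᵥ ((M ^ k) *ᵥ v))).re := by
          have := (hb₂ ((M ^ k) *ᵥ v)).1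
          rw [div_mul_eq_mul_div, le_div_iff₀ hc₂]
          nlinarith
      _ ≤ (1 / c₂) * (r ^ k * (star v ⬝ᵥ (P *ᵥ v)).re) := by
          apply mul_le_mul_of_nonneg_left (hiter k) (by positivity)
  have hnrm : Tendsto (fun k => ‖((M ^ k) *ᵥ v) i‖) atTop (𝓝 0) := by
    have hcont : Tendsto Real.sqrt (𝓝 0) (𝓝 0) := by
      simpa using (Real.continuous_sqrt.tendsto 0)
    have hcc := hcont.comp hsq
    simp only [Function.comp_def] at hcc
    convert hcc using 2 with k
    rw [Real.sqrt_sq (norm_nonneg _)]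
  have := tendsto_zero_iff_norm_tendsto_zero.mpr hnrm
  simpa using this


lemma posdef_conj {N B : Matrix (Fin n) (Fin n) ℂ} (hN : N.PosDef) (hB : IsUnit B) :
    (Bᴴ * N * B).PosDef := by
  refine Matrix.PosDef.of_dotProduct_mulVec_pos (Matrix.isHermitian_conjTranspose_mul_mul B hN.1) fun x hx => ?_
  rw [dot_conj]
  refine hN.dotProduct_mulVec_pos fun h => hx ?_
  have hinj : Function.Injective (B.mulVec) := Matrix.mulVec_injective_iff_isUnit.mpr hB
  have : B *ᵥ x = B *ᵥ 0 := by rw [h, Matrix.mulVec_zero]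
  exact hinj this

end Aux

set_option maxHeartbeats 2000000 in
/-- If the antilinear system is stabilizable and `P > 0` solves the
anti-Riccati equation, then `X = Q₀^{-1/2}(P⁻¹ + (A₂Q⁻¹A₂^H)^# + (B₂R⁻¹B₂^H)^#)Q₀^{-1/2}`
is the maximal Hermitian positive definite solution of `X + A^H X^{-#} A = I` with
`A = Q₀^{-#/2} A₂ Q⁻¹ Q₀^{-1/2}`: every Hermitian positive definite solution `Y`
satisfies `Y ≤ X` in the Loewner order. -/
theorem nonlinearEq_maximal_solution
    (A₂ : Matrix (Fin n) (Fin n) ℂ) (B₂ : Matrix (Fin n) (Fin m) ℂ)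
    (Q : Matrix (Fin n) (Fin n) ℂ) (R : Matrix (Fin m) (Fin m) ℂ)
    (hQ : Q.PosDef) (hR : R.PosDef)
    (hstab : AntiStabilizable A₂ B₂)
    (P : Matrix (Fin n) (Fin n) ℂ) (hP : P.PosDef) (heq : AntiRiccati A₂ B₂ Q R P)
    (s : Matrix (Fin n) (Fin n) ℂ) (hs : s.PosDef) (hsq : s * s = Qzero A₂ B₂ Q R)
    (A : Matrix (Fin n) (Fin n) ℂ) (hA : A = (mconj s)⁻¹ * A₂ * Q⁻¹ * s⁻¹)
    (X : Matrix (Fin n) (Fin n) ℂ)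
    (hX : X = s⁻¹ * (P⁻¹ + mconj (A₂ * Q⁻¹ * A₂ᴴ) + mconj (B₂ * R⁻¹ * B₂ᴴ)) * s⁻¹) :
    X.PosDef ∧ X + Aᴴ * (mconj X)⁻¹ * A = 1 ∧
    ∀ Y : Matrix (Fin n) (Fin n) ℂ, Y.PosDef → Y + Aᴴ * (mconj Y)⁻¹ * A = 1 →
      (X - Y).PosSemidef := by
  classical
  have hPcd : (mconj P).PosDef := hP.mconj
  have hsc : (mconj s).PosDef := hs.mconj
  set Pc := mconj P with hPcdef
  have dP : IsUnit P.det := (Matrix.isUnit_iff_isUnit_det P).mp hP.isUnit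
  have dQ : IsUnit Q.det := (Matrix.isUnit_iff_isUnit_det Q).mp hQ.isUnit
  have dR : IsUnit R.det := (Matrix.isUnit_iff_isUnit_det R).mp hR.isUnit
  have ds : IsUnit s.det := (Matrix.isUnit_iff_isUnit_det s).mp hs.isUnit
  have dPc : IsUnit Pc.det := (Matrix.isUnit_iff_isUnit_det _).mp hPcd.isUnit
  have dsc : IsUnit (mconj s).det := (Matrix.isUnit_iff_isUnit_det _).mp hsc.isUnit
  have hΔpd : (R + B₂ᴴ * Pc * B₂).PosDef :=
    hR.add_posSemidef (hPcd.posSemidef.conjTranspose_mul_mul_same B₂)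
  set Δ := R + B₂ᴴ * Pc * B₂ with hΔdef
  have dΔ : IsUnit Δ.det := (Matrix.isUnit_iff_isUnit_det _).mp hΔpd.isUnit
  set Sh := B₂ᴴ * Pc * A₂ with hShdef
  set K := -(Δ⁻¹ * Sh) with hKdef
  set Ac := A₂ + B₂ * K with hAcdef
  set Z := Pc * Ac with hZdef
  have h : -Q = A₂ᴴ * Pc * A₂ - A₂ᴴ * Pc * B₂ * Δ⁻¹ * Sh - P := heq
  clear_value Pc Δ Sh K Ac Z
  have hP2 : P - Q = A₂ᴴ * Pc * A₂ - A₂ᴴ * Pc * B₂ * Δ⁻¹ * Sh := by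
    calc P - Q = P + -Q := by abel
      _ = P + (A₂ᴴ * Pc * A₂ - A₂ᴴ * Pc * B₂ * Δ⁻¹ * Sh - P) := by rw [h]
      _ = A₂ᴴ * Pc * A₂ - A₂ᴴ * Pc * B₂ * Δ⁻¹ * Sh := by abel
  have hZ2 : A₂ᴴ * Z = P - Q := by
    rw [hZdef, hAcdef, hKdef, hP2]
    simp only [Matrix.mul_add, Matrix.mul_neg, Matrix.neg_mul, sub_eq_add_neg, Matrix.mul_assoc]
  have hΔK : Δ * K = -Sh := by
    rw [hKdef, Matrix.mul_neg, Matrix.mul_nonsing_inv_cancel_left _ _ dΔ]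
  have hZ3 : B₂ᴴ * Z = -(R * K) := by
    have e : B₂ᴴ * Z = Sh + (Δ * K - R * K) := by
      rw [hZdef, hAcdef, hShdef, hΔdef]
      simp only [Matrix.mul_add, Matrix.add_mul, sub_eq_add_neg, Matrix.mul_assoc]
      abel
    rw [e, hΔK]
    abel
  have hI4 : Acᴴ * Z = P - Q - Kᴴ * (R * K) := by
    have e : Acᴴ * Z = A₂ᴴ * Z + Kᴴ * (B₂ᴴ * Z) := by
      rw [hAcdef, Matrix.conjTranspose_add, Matrix.conjTranspose_mul, Matrix.add_mul,
        Matrix.mul_assoc]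
    rw [e, hZ2, hZ3, Matrix.mul_neg]
    abel
  set Uc := Pc⁻¹ + A₂ * Q⁻¹ * A₂ᴴ + B₂ * R⁻¹ * B₂ᴴ with hUcdef
  have hUcpd : Uc.PosDef :=
    (hPcd.inv.add_posSemidef ((hQ.inv).posSemidef.mul_mul_conjTranspose_same A₂)).add_posSemidef
      ((hR.inv).posSemidef.mul_mul_conjTranspose_same B₂)
  have dUc : IsUnit Uc.det := (Matrix.isUnit_iff_isUnit_det _).mp hUcpd.isUnit
  clear_value Uc
  have hUcZ : Uc * (Z * P⁻¹) = A₂ * Q⁻¹ := by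
    have t1 : Pc⁻¹ * (Z * P⁻¹) = Ac * P⁻¹ := by
      rw [← Matrix.mul_assoc, hZdef, Matrix.nonsing_inv_mul_cancel_left _ _ dPc]
    have t2 : A₂ * Q⁻¹ * A₂ᴴ * (Z * P⁻¹) = A₂ * Q⁻¹ - A₂ * P⁻¹ := by
      calc A₂ * Q⁻¹ * A₂ᴴ * (Z * P⁻¹) = A₂ * Q⁻¹ * (A₂ᴴ * Z) * P⁻¹ := by
            simp only [Matrix.mul_assoc]
        _ = A₂ * Q⁻¹ * (P - Q) * P⁻¹ := by rw [hZ2]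
        _ = A₂ * Q⁻¹ - A₂ * P⁻¹ := by
            rw [Matrix.mul_sub, Matrix.sub_mul, Matrix.mul_nonsing_inv_cancel_right _ _ dP,
              Matrix.nonsing_inv_mul_cancel_right _ _ dQ]
    have t3 : B₂ * R⁻¹ * B₂ᴴ * (Z * P⁻¹) = -(B₂ * K * P⁻¹) := by
      calc B₂ * R⁻¹ * B₂ᴴ * (Z * P⁻¹) = B₂ * R⁻¹ * (B₂ᴴ * Z) * P⁻¹ := by
            simp only [Matrix.mul_assoc]
        _ = B₂ * R⁻¹ * -(R * K) * P⁻¹ := by rw [hZ3]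
        _ = -(B₂ * K * P⁻¹) := by
            rw [Matrix.mul_neg, ← Matrix.mul_assoc, Matrix.nonsing_inv_mul_cancel_right _ _ dR,
              Matrix.neg_mul]
    calc Uc * (Z * P⁻¹)
        = Pc⁻¹ * (Z * P⁻¹) + A₂ * Q⁻¹ * A₂ᴴ * (Z * P⁻¹) + B₂ * R⁻¹ * B₂ᴴ * (Z * P⁻¹) := by
          rw [hUcdef, Matrix.add_mul, Matrix.add_mul]
      _ = Ac * P⁻¹ + (A₂ * Q⁻¹ - A₂ * P⁻¹) + -(B₂ * K * P⁻¹) := by rw [t1, t2, t3]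
      _ = A₂ * Q⁻¹ := by rw [hAcdef, Matrix.add_mul]; abel
  have hUciA : Uc⁻¹ * (A₂ * Q⁻¹) = Z * P⁻¹ := by
    rw [← hUcZ, Matrix.nonsing_inv_mul_cancel_left _ _ dUc]
  -- X positive definite
  have hsiH : (s⁻¹)ᴴ = s⁻¹ := by
    rw [Matrix.conjTranspose_nonsing_inv, hs.isHermitian.eq]
  have hU : (P⁻¹ + mconj (A₂ * Q⁻¹ * A₂ᴴ) + mconj (B₂ * R⁻¹ * B₂ᴴ)).PosDef :=
    (hP.inv.add_posSemidef ((hQ.inv).posSemidef.mul_mul_conjTranspose_same A₂).mconj).add_posSemidef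
      ((hR.inv).posSemidef.mul_mul_conjTranspose_same B₂).mconj
  have hXpd : X.PosDef := by
    have hpc := posdef_conj hU (B := s⁻¹) hs.inv.isUnit
    rw [hsiH] at hpc
    rw [hX]
    exact hpc
  -- inverse of mconj X
  have hXcinv : (mconj X)⁻¹ = mconj s * Uc⁻¹ * mconj s := by
    have e1 : mconj X = (mconj s)⁻¹ * Uc * (mconj s)⁻¹ := by
      rw [hX, mconj_mul, mconj_mul, mconj_inv, mconj_add, mconj_add, mconj_inv,
        mconj_mconj, mconj_mconj, hUcdef, ← hPcdef]
    rw [e1, Matrix.mul_inv_rev, Matrix.mul_inv_rev, Matrix.nonsing_inv_nonsing_inv _ dsc,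
      ← Matrix.mul_assoc]
  have hAH : Aᴴ = s⁻¹ * Q⁻¹ * A₂ᴴ * (mconj s)⁻¹ := by
    rw [hA]
    rw [Matrix.conjTranspose_mul, Matrix.conjTranspose_mul, Matrix.conjTranspose_mul]
    rw [Matrix.conjTranspose_nonsing_inv, Matrix.conjTranspose_nonsing_inv,
      Matrix.conjTranspose_nonsing_inv]
    rw [hs.isHermitian.eq, hQ.isHermitian.eq, hsc.isHermitian.eq]
    simp only [Matrix.mul_assoc]
  have hXcA : (mconj X)⁻¹ * A = mconj s * (Z * (P⁻¹ * s⁻¹)) := by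
    rw [hXcinv, hA]
    simp only [Matrix.mul_assoc]
    rw [Matrix.mul_nonsing_inv_cancel_left _ _ dsc]
    rw [← Matrix.mul_assoc A₂ Q⁻¹ s⁻¹, ← Matrix.mul_assoc Uc⁻¹ _ s⁻¹, hUciA,
      Matrix.mul_assoc Z P⁻¹ s⁻¹]
  have key : Aᴴ * ((mconj X)⁻¹ * A) = s⁻¹ * (Q⁻¹ - P⁻¹) * s⁻¹ := by
    rw [hXcA, hAH]
    simp only [Matrix.mul_assoc]
    rw [Matrix.nonsing_inv_mul_cancel_left _ _ dsc]
    rw [← Matrix.mul_assoc A₂ᴴ Z _, hZ2]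
    have e5 : Q⁻¹ * ((P - Q) * (P⁻¹ * s⁻¹)) = (Q⁻¹ - P⁻¹) * s⁻¹ := by
      rw [Matrix.sub_mul, Matrix.mul_sub, Matrix.mul_nonsing_inv_cancel_left _ _ dP,
        Matrix.nonsing_inv_mul_cancel_left _ _ dQ, Matrix.sub_mul]
    rw [e5, ← Matrix.mul_assoc]
  have goal2 : X + Aᴴ * (mconj X)⁻¹ * A = 1 := by
    rw [Matrix.mul_assoc, key, hX]
    rw [← Matrix.add_mul, ← Matrix.mul_add]
    have hsum : P⁻¹ + mconj (A₂ * Q⁻¹ * A₂ᴴ) + mconj (B₂ * R⁻¹ * B₂ᴴ) + (Q⁻¹ - P⁻¹)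
        = s * s := by
      calc P⁻¹ + mconj (A₂ * Q⁻¹ * A₂ᴴ) + mconj (B₂ * R⁻¹ * B₂ᴴ) + (Q⁻¹ - P⁻¹)
          = Q⁻¹ + mconj (A₂ * Q⁻¹ * A₂ᴴ) + mconj (B₂ * R⁻¹ * B₂ᴴ) := by abel
        _ = s * s := hsq.symm
    rw [hsum, ← Matrix.mul_assoc s⁻¹ s s, Matrix.nonsing_inv_mul _ ds, one_mul,
      Matrix.mul_nonsing_inv _ ds]
  refine ⟨hXpd, goal2, fun Y hY hYeq => ?_⟩
  -- maximality
  have hXH : X.IsHermitian := hXpd.isHermitian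
  have hYH : Y.IsHermitian := hY.isHermitian
  set Xc := mconj X with hXcdef
  set Yc := mconj Y with hYcdef
  have hXcpd : Xc.PosDef := hXpd.mconj
  have hYcpd : Yc.PosDef := hY.mconj
  have dXc : IsUnit Xc.det := (Matrix.isUnit_iff_isUnit_det _).mp hXcpd.isUnit
  have dYc : IsUnit Yc.det := (Matrix.isUnit_iff_isUnit_det _).mp hYcpd.isUnit
  clear_value Xc Yc
  set F := Xc⁻¹ * A with hFdef
  have hFH : Fᴴ = Aᴴ * Xc⁻¹ := by
    rw [hFdef, Matrix.conjTranspose_mul, Matrix.conjTranspose_nonsing_inv,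
      hXcpd.isHermitian.eq]
  set Fc := mconj F with hFcdef
  set Gg := Fc * F with hGgdef
  set D := X - Y with hDdef
  set Dc := mconj D with hDcdef
  have hDH : D.IsHermitian := hXH.sub hYH
  have hDcH : Dc.IsHermitian := hDH.mconj
  clear_value F Fc Gg D Dc
  have hDc : Dc = Xc - Yc := by rw [hDcdef, hDdef, mconj_sub, ← hXcdef, ← hYcdef]
  have hXd : X = 1 - Aᴴ * Xc⁻¹ * A := eq_sub_of_add_eq goal2
  have hYd : Y = 1 - Aᴴ * Yc⁻¹ * A := eq_sub_of_add_eq hYeq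
  have hD2 : D = Aᴴ * Yc⁻¹ * A - Aᴴ * Xc⁻¹ * A := by rw [hDdef, hXd, hYd]; abel
  have hkey : D = Fᴴ * Dc * F + Fᴴ * (Dc * Yc⁻¹ * Dc) * F := by
    have hYD : Yc + Dc = Xc := by rw [hDc]; abel
    have c0 : Dc + Dc * Yc⁻¹ * Dc = Dc * Yc⁻¹ * Xc := by
      calc Dc + Dc * Yc⁻¹ * Dc
          = Dc * Yc⁻¹ * Yc + Dc * Yc⁻¹ * Dc := by
            rw [Matrix.nonsing_inv_mul_cancel_right _ _ dYc]
        _ = Dc * Yc⁻¹ * (Yc + Dc) := by rw [Matrix.mul_add]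
        _ = Dc * Yc⁻¹ * Xc := by rw [hYD]
    have c1 : Fᴴ * Dc * F + Fᴴ * (Dc * Yc⁻¹ * Dc) * F = Fᴴ * (Dc * Yc⁻¹ * Xc) * F := by
      rw [← c0, Matrix.mul_add, Matrix.add_mul]
    rw [c1, hFH, hFdef]
    simp only [Matrix.mul_assoc]
    rw [Matrix.mul_nonsing_inv_cancel_left _ _ dXc]
    rw [hDc, Matrix.sub_mul, Matrix.mul_sub, Matrix.nonsing_inv_mul_cancel_left _ _ dXc,
      Matrix.mul_nonsing_inv_cancel_left _ _ dYc, Matrix.mul_sub]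
    rw [hD2]
    simp only [Matrix.mul_assoc]
  have mDc : mconj Dc = D := by rw [hDcdef, mconj_mconj]
  have mD : mconj D = Dc := hDcdef.symm
  have mF : mconj F = Fc := hFcdef.symm
  have mYci : mconj (Yc⁻¹) = Y⁻¹ := by rw [mconj_inv, hYcdef, mconj_mconj]
  have mFH : mconj (Fᴴ) = Fcᴴ := by rw [mconj_conjTranspose, ← hFcdef]
  have hDcrec : Dc = Fcᴴ * D * Fc + Fcᴴ * (D * Y⁻¹ * D) * Fc := by
    have h5 := congrArg mconj hkey
    simp only [mconj_add, mconj_mul, mD, mDc, mYci, mFH, mF] at h5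
    exact h5
  have hGgH : Ggᴴ = Fᴴ * Fcᴴ := by rw [hGgdef, Matrix.conjTranspose_mul]
  set T := Ggᴴ * (D * Y⁻¹ * D) * Gg + Fᴴ * (Dc * Yc⁻¹ * Dc) * F with hTdef
  clear_value T
  have hGrec : D = Ggᴴ * D * Gg + T := by
    calc D = Fᴴ * Dc * F + Fᴴ * (Dc * Yc⁻¹ * Dc) * F := hkey
      _ = Fᴴ * (Fcᴴ * D * Fc + Fcᴴ * (D * Y⁻¹ * D) * Fc) * F
          + Fᴴ * (Dc * Yc⁻¹ * Dc) * F := by rw [← hDcrec]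
      _ = Ggᴴ * D * Gg + T := by
          rw [hTdef, hGgH, hGgdef]
          simp only [Matrix.mul_add, Matrix.add_mul, Matrix.mul_assoc]
          abel
  have hTpsd : T.PosSemidef := by
    rw [hTdef]
    have q1 : (D * Y⁻¹ * D).PosSemidef := by
      have hq := (hY.inv.posSemidef).conjTranspose_mul_mul_same D
      rwa [hDH.eq] at hq
    have q2 : (Dc * Yc⁻¹ * Dc).PosSemidef := by
      have hq := (hYcpd.inv.posSemidef).conjTranspose_mul_mul_same Dc
      rwa [hDcH.eq] at hq
    exact (q1.conjTranspose_mul_mul_same Gg).add (q2.conjTranspose_mul_mul_same F)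
  have hT2 : D - Ggᴴ * D * Gg = T := sub_eq_of_eq_add' hGrec
  have hsub : ∀ k : ℕ, (D - (Gg ^ k)ᴴ * D * Gg ^ k).PosSemidef := by
    intro k; induction k with
    | zero =>
      rw [pow_zero, Matrix.conjTranspose_one, one_mul, mul_one, sub_self]
      exact Matrix.PosSemidef.zero
    | succ k ih =>
      have e3 : (Gg ^ (k+1))ᴴ * D * Gg ^ (k+1) = Ggᴴ * ((Gg ^ k)ᴴ * D * Gg ^ k) * Gg := by
        rw [pow_succ, Matrix.conjTranspose_mul]
        simp only [Matrix.mul_assoc]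
      have e4 : D - (Gg ^ (k+1))ᴴ * D * Gg ^ (k+1)
          = T + Ggᴴ * (D - (Gg ^ k)ᴴ * D * Gg ^ k) * Gg := by
        rw [e3, Matrix.mul_sub, Matrix.sub_mul, ← hT2]
        abel
      rw [e4]
      exact hTpsd.add (ih.conjTranspose_mul_mul_same Gg)
  -- similarity of Gg
  set Mm := mconj Ac * Ac with hMmdef
  clear_value Mm
  have hFform : F = mconj s * Z * P⁻¹ * s⁻¹ := by
    rw [hXcA]
    simp only [Matrix.mul_assoc]
  have mZ : mconj Z = P * mconj Ac := by
    rw [hZdef, mconj_mul, hPcdef, mconj_mconj]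
  have mPinv : mconj (P⁻¹) = Pc⁻¹ := by rw [mconj_inv, ← hPcdef]
  have hFcform : Fc = s * (P * mconj Ac) * Pc⁻¹ * (mconj s)⁻¹ := by
    rw [hFcdef, hFform]
    simp only [mconj_mul, mconj_inv, mconj_mconj, mZ, mPinv]
  have hGform : Gg = s * P * Mm * P⁻¹ * s⁻¹ := by
    rw [hGgdef, hFcform, hFform, hMmdef]
    simp only [Matrix.mul_assoc]
    rw [Matrix.nonsing_inv_mul_cancel_left _ _ dsc]
    rw [hZdef, Matrix.mul_assoc Pc Ac, Matrix.nonsing_inv_mul_cancel_left _ _ dPc]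
  have hGpow : ∀ k : ℕ, Gg ^ k = s * P * Mm ^ k * P⁻¹ * s⁻¹ := by
    intro k; induction k with
    | zero =>
      rw [pow_zero, pow_zero, mul_one, Matrix.mul_nonsing_inv_cancel_right _ _ dP,
        Matrix.mul_nonsing_inv _ ds]
    | succ k ih =>
      rw [pow_succ, pow_succ, ih, hGform]
      simp only [Matrix.mul_assoc]
      rw [Matrix.nonsing_inv_mul_cancel_left _ _ ds,
        Matrix.nonsing_inv_mul_cancel_left _ _ dP]
  -- Lyapunov inequality for Mm
  have e1 : Acᴴ * (Pc * Ac) = P - Q - Kᴴ * (R * K) := by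
    rw [← hZdef, hI4]
  have mPc : mconj Pc = P := by rw [hPcdef, mconj_mconj]
  have e2 : (mconj Ac)ᴴ * (P * mconj Ac)
      = Pc - mconj Q - (mconj K)ᴴ * (mconj R * mconj K) := by
    have h6 := congrArg mconj e1
    simp only [mconj_mul, mconj_sub, mconj_conjTranspose, mPc, ← hPcdef] at h6
    exact h6
  have hMmH : Mmᴴ = Acᴴ * (mconj Ac)ᴴ := by rw [hMmdef, Matrix.conjTranspose_mul]
  have hLyapEq : P - Mmᴴ * P * Mm - Q =
      Kᴴ * R * K + Acᴴ * mconj Q * Ac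
        + (mconj K * Ac)ᴴ * mconj R * (mconj K * Ac) := by
    have e3 : Mmᴴ * P * Mm = Acᴴ * ((mconj Ac)ᴴ * (P * mconj Ac)) * Ac := by
      rw [hMmH, hMmdef]
      simp only [Matrix.mul_assoc]
    rw [e3, e2]
    simp only [Matrix.conjTranspose_mul, Matrix.sub_mul, Matrix.mul_sub, Matrix.mul_assoc]
    rw [e1]
    abel
  have hLyap : (P - Mmᴴ * P * Mm - Q).PosSemidef := by
    rw [hLyapEq]
    have p1 : (Kᴴ * R * K).PosSemidef := hR.posSemidef.conjTranspose_mul_mul_same K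
    have p2 : (Acᴴ * mconj Q * Ac).PosSemidef :=
      (hQ.posSemidef.mconj).conjTranspose_mul_mul_same Ac
    have p3 : ((mconj K * Ac)ᴴ * mconj R * (mconj K * Ac)).PosSemidef :=
      (hR.posSemidef.mconj).conjTranspose_mul_mul_same (mconj K * Ac)
    exact (p1.add p2).add p3
  -- conclusion
  refine Matrix.PosSemidef.of_dotProduct_mulVec_nonneg hDH fun u => ?_
  have hwten : Tendsto (fun k => Gg ^ k *ᵥ u) atTop (𝓝 0) := by
    have h1 := stein_decay Mm P Q hP hQ hLyap ((P⁻¹ * s⁻¹) *ᵥ u)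
    have h2 := tendsto_mulVec_zero (s * P) h1
    have h3 : (fun k => (s * P) *ᵥ (Mm ^ k *ᵥ ((P⁻¹ * s⁻¹) *ᵥ u)))
        = fun k => Gg ^ k *ᵥ u := by
      funext k
      rw [Matrix.mulVec_mulVec, Matrix.mulVec_mulVec, hGpow k]
      congr 1
      simp only [Matrix.mul_assoc]
    rwa [h3] at h2
  have hzten : Tendsto (fun k => star (Gg ^ k *ᵥ u) ⬝ᵥ (D *ᵥ (Gg ^ k *ᵥ u))) atTop (𝓝 0) :=
    tendsto_quad_zero D hwten
  have hle : ∀ k, star (Gg ^ k *ᵥ u) ⬝ᵥ (D *ᵥ (Gg ^ k *ᵥ u)) ≤ star u ⬝ᵥ (D *ᵥ u) := by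
    intro k
    have h0 := (hsub k).dotProduct_mulVec_nonneg u
    rw [Matrix.sub_mulVec, dotProduct_sub, dot_conj] at h0
    exact sub_nonneg.mp h0
  have himten : Tendsto (fun k => (star (Gg ^ k *ᵥ u) ⬝ᵥ (D *ᵥ (Gg ^ k *ᵥ u))).im)
      atTop (𝓝 0) := by
    have h7 := (Complex.continuous_im.tendsto 0).comp hzten
    simpa [Function.comp_def] using h7
  have hreten : Tendsto (fun k => (star (Gg ^ k *ᵥ u) ⬝ᵥ (D *ᵥ (Gg ^ k *ᵥ u))).re)
      atTop (𝓝 0) := by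
    have h7 := (Complex.continuous_re.tendsto 0).comp hzten
    simpa [Function.comp_def] using h7
  have hdim : (star u ⬝ᵥ (D *ᵥ u)).im = 0 := by
    have hconst : (fun k : ℕ => (star (Gg ^ k *ᵥ u) ⬝ᵥ (D *ᵥ (Gg ^ k *ᵥ u))).im)
        = fun _ => (star u ⬝ᵥ (D *ᵥ u)).im := by
      funext k; exact (Complex.le_def.mp (hle k)).2
    rw [hconst] at himten
    exact tendsto_nhds_unique tendsto_const_nhds himten
  have hdre : 0 ≤ (star u ⬝ᵥ (D *ᵥ u)).re := by
    refine le_of_tendsto hreten (Filter.Eventually.of_forall fun k => ?_)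
    exact (Complex.le_def.mp (hle k)).1
  rw [Complex.le_def]
  refine ⟨by simpa using hdre, by simpa using hdim.symm⟩
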